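/- Let W be a finite Coxeter group. For every v, w ∈ W, the set [e,v]_R ∩ [e,w] = {x ∈ W : x ≤_R v and x ≤ w} has a unique element of maximal length. -/

import Mathlib

/-- The right weak Bruhat order: `u ≤_R v` iff `ℓ(u) + ℓ(u⁻¹v) = ℓ(v)`. -/
def rWeak {B W : Type*} [Group W] {M : CoxeterMatrix B} (cs : CoxeterSystem M W)
    (u v : W) : Prop :=
  cs.length u + cs.length (u⁻¹ * v) = cs.length v

/-- The strong Bruhat order: `u ≤ v` iff some reduced word for `v` has a subword
which is a word for `u`. -/
def bruhat {B W : Type*} [Group W] {M : CoxeterMatrix B} (cs : CoxeterSystem M W)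
    (u v : W) : Prop :=
  ∃ ω : List B, cs.IsReduced ω ∧ cs.wordProd ω = v ∧
    ∃ ω' : List B, ω'.Sublist ω ∧ cs.wordProd ω' = u

namespace CoxProofAux

open CoxeterSystem List
open scoped Classical

variable {B W : Type*} [Group W] {M : CoxeterMatrix B} (cs : CoxeterSystem M W)

local prefix:100 "σ" => cs.simple
local prefix:100 "π" => cs.wordProd
local prefix:100 "ℓ" => cs.length

lemma rightInvSeq_cons' (i : B) (ω : List B) :
    cs.rightInvSeq (i :: ω) = ((π ω)⁻¹ * σ i * π ω) :: cs.rightInvSeq ω := rfl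

/-- indicator: `-1` if `t = u`, else `1`. -/
noncomputable def ind (u t : W) : ℤˣ := if t = u then -1 else 1

noncomputable def sigmaFun (i : B) : W × ℤˣ → W × ℤˣ :=
  fun p => (σ i * p.1 * σ i, ind (σ i) p.1 * p.2)

lemma simple_conj_eq_iff (i : B) (x : W) : σ i * x * σ i = σ i ↔ x = σ i := by
  constructor
  · intro h
    have h2 : σ i * (σ i * x * σ i) * σ i = σ i * σ i * σ i := by rw [h]
    rw [show σ i * (σ i * x * σ i) * σ i = (σ i * σ i) * x * (σ i * σ i) from by group,
      cs.simple_mul_simple_self, one_mul, mul_one] at h2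
    rw [h2, one_mul]
  · rintro rfl
    rw [cs.simple_mul_simple_self, one_mul]

lemma ind_congr {u t u' t' : W} (h : (t = u) ↔ (t' = u')) : ind u t = ind u' t' := by
  unfold ind
  by_cases hc : t = u
  · rw [if_pos hc, if_pos (h.mp hc)]
  · rw [if_neg hc, if_neg (fun hc' => hc (h.mpr hc'))]

lemma sigmaFun_involutive (i : B) : Function.Involutive (sigmaFun cs i) := by
  intro p
  unfold sigmaFun
  rw [Prod.mk.injEq]
  constructor
  · rw [show σ i * (σ i * p.1 * σ i) * σ i = (σ i * σ i) * p.1 * (σ i * σ i) from by group,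
      cs.simple_mul_simple_self, one_mul, mul_one]
  · rw [show (ind (σ i) (σ i * p.1 * σ i)) = ind (σ i) p.1 from
      ind_congr (simple_conj_eq_iff cs i p.1)]
    unfold ind
    by_cases hc : p.1 = σ i
    · rw [if_pos hc]; simp
    · rw [if_neg hc]; simp

noncomputable def sigma (i : B) : Equiv.Perm (W × ℤˣ) := (sigmaFun_involutive cs i).toPerm

lemma sigma_apply (i : B) (p : W × ℤˣ) : sigma cs i p = sigmaFun cs i p := rfl

/-- The sign of `u` relative to the word `ω`. -/
noncomputable def sgn (u : W) (ω : List B) : ℤˣ :=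
  ((cs.rightInvSeq ω).map (ind u)).prod

lemma sgn_nil (u : W) : sgn cs u [] = 1 := rfl

lemma prod_sigma_apply (ω : List B) (p : W × ℤˣ) :
    ((ω.map (sigma cs)).prod) p = (π ω * p.1 * (π ω)⁻¹, sgn cs p.1 ω * p.2) := by
  induction ω with
  | nil => simp [sgn_nil]
  | cons i ω ih =>
    rw [map_cons, prod_cons, Equiv.Perm.mul_apply, ih, sigma_apply]
    have hiff : (π ω * p.1 * (π ω)⁻¹ = σ i) ↔ ((π ω)⁻¹ * σ i * π ω = p.1) := by
      constructor
      · intro h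
        rw [← h]; group
      · intro h
        rw [← h]; group
    unfold sigmaFun
    rw [Prod.mk.injEq]
    constructor
    · rw [wordProd_cons, mul_inv_rev, cs.inv_simple]; group
    · rw [show ind (σ i) (π ω * p.1 * (π ω)⁻¹) = ind p.1 ((π ω)⁻¹ * σ i * π ω) from
        ind_congr hiff]
      show _ = sgn cs p.1 (i :: ω) * p.2
      unfold sgn
      rw [rightInvSeq_cons', map_cons, prod_cons, ← mul_assoc]

/-- `σ j * (σ i * σ j)^k = (σ j * σ i)^k * σ j`. -/
lemma simple_mul_pow (i j : B) (k : ℕ) :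
    σ j * (σ i * σ j) ^ k = (σ j * σ i) ^ k * σ j := by
  induction k with
  | zero => simp
  | succ k ih =>
    rw [pow_succ, ← mul_assoc, ih, pow_succ]
    group

lemma inv_pow_simple (i j : B) (k : ℕ) : ((σ i * σ j) ^ k)⁻¹ = (σ j * σ i) ^ k := by
  rw [← inv_pow, mul_inv_rev, cs.inv_simple, cs.inv_simple]

lemma ris_alternating (i j : B) (n : ℕ) :
    cs.rightInvSeq (alternatingWord i j n)
      = ((List.range n).reverse).map (fun k => (σ j * σ i) ^ k * σ j) := by
  induction n with
  | zero => simp [alternatingWord]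
  | succ n ih =>
    rw [alternatingWord_succ', rightInvSeq_cons', ih, List.range_succ, List.reverse_append]
    simp only [reverse_cons, reverse_nil, nil_append, singleton_append, map_cons]
    congr 1
    rw [cs.prod_alternatingWord_eq_mul_pow]
    rcases Nat.even_or_odd n with hn | hn
    · rw [if_pos hn, if_pos hn, one_mul]
      obtain ⟨k, hk⟩ := hn
      have h2 : n / 2 = k := by omega
      rw [h2, inv_pow_simple, mul_assoc, simple_mul_pow, ← mul_assoc, ← pow_add]
      congr 2
      omega
    · have hne := Nat.not_even_iff_odd.mpr hn
      rw [if_neg hne, if_neg hne]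
      obtain ⟨k, hk⟩ := hn
      have h2 : n / 2 = k := by omega
      rw [h2, mul_inv_rev, inv_pow_simple, cs.inv_simple, simple_mul_pow]
      have hn2 : n = k + 1 + k := by omega
      rw [hn2, pow_add, pow_add, pow_one]
      simp only [mul_assoc]

set_option linter.unusedSectionVars false

lemma sgn_alternating (i j : B) (u : W) :
    sgn cs u (alternatingWord i j (2 * M i j)) = 1 := by
  unfold sgn
  rw [ris_alternating, List.map_map, List.map_reverse,
    List.prod_reverse, two_mul, List.range_add, List.map_append, List.prod_append,
    List.map_map]
  have hmap : List.map ((ind u ∘ fun k => (σ j * σ i) ^ k * σ j) ∘ fun x => M i j + x)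
      (List.range (M i j)) = List.map (ind u ∘ fun k => (σ j * σ i) ^ k * σ j)
      (List.range (M i j)) := by
    apply List.map_congr_left
    intro k _
    simp only [Function.comp_apply]
    congr 1
    rw [pow_add, cs.simple_mul_simple_pow' i j, one_mul]
  rw [hmap, Int.units_mul_self]

lemma pow_sigma_eq (i j : B) (m : ℕ) :
    (sigma cs i * sigma cs j) ^ m = ((alternatingWord i j (2 * m)).map (sigma cs)).prod := by
  induction m with
  | zero => rfl
  | succ m ih =>
    have h1 : 2 * (m + 1) = (2 * m + 1) + 1 := by omega
    rw [h1, alternatingWord_succ', alternatingWord_succ']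
    rw [if_neg (by simp [Nat.even_add_one, Nat.even_mul]), if_pos (by simp [Nat.even_mul])]
    rw [List.map_cons, List.map_cons, List.prod_cons, List.prod_cons, ← ih, pow_succ']
    rw [mul_assoc]

lemma isLiftable_sigma : M.IsLiftable (fun i => sigma cs i) := by
  intro i j
  rw [pow_sigma_eq]
  apply Equiv.ext
  intro p
  rw [prod_sigma_apply]
  have h1 : π (alternatingWord i j (2 * M i j)) = 1 := by
    rw [cs.prod_alternatingWord_eq_mul_pow, if_pos (by simp [Nat.even_mul]),
      one_mul]
    rw [show 2 * M i j / 2 = M i j by omega, cs.simple_mul_simple_pow]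
  rw [h1, sgn_alternating]
  simp

/-- The reflection-sign representation. -/
noncomputable def Phi : W →* Equiv.Perm (W × ℤˣ) :=
  cs.lift ⟨fun i => sigma cs i, isLiftable_sigma cs⟩

lemma Phi_simple (i : B) : Phi cs (σ i) = sigma cs i :=
  cs.lift_apply_simple (isLiftable_sigma cs) i

lemma Phi_wordProd (ω : List B) : Phi cs (π ω) = ((ω.map (sigma cs)).prod) := by
  induction ω with
  | nil => rw [cs.wordProd_nil, map_one]; rfl
  | cons i ω ih => rw [cs.wordProd_cons, map_mul, Phi_simple, List.map_cons, List.prod_cons, ih]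

lemma Phi_apply_of_wordProd {w : W} (ω : List B) (h : π ω = w) (p : W × ℤˣ) :
    Phi cs w p = (w * p.1 * w⁻¹, sgn cs p.1 ω * p.2) := by
  subst h
  rw [Phi_wordProd, prod_sigma_apply]

/-- The sign of `u` at `w`. -/
noncomputable def eta (w u : W) : ℤˣ := ((Phi cs w) (u, 1)).2

lemma eta_eq_sgn {w : W} (u : W) (ω : List B) (h : π ω = w) : eta cs w u = sgn cs u ω := by
  unfold eta
  rw [Phi_apply_of_wordProd cs ω h]
  simp

lemma Phi_apply (w : W) (p : W × ℤˣ) :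
    Phi cs w p = (w * p.1 * w⁻¹, eta cs w p.1 * p.2) := by
  obtain ⟨ω, _, h⟩ := cs.exists_reduced_word' w
  rw [Phi_apply_of_wordProd cs ω h.symm, eta_eq_sgn cs p.1 ω h.symm]

lemma eta_mul (a b u : W) : eta cs (a * b) u = eta cs b u * eta cs a (b * u * b⁻¹) := by
  unfold eta
  rw [map_mul, Equiv.Perm.mul_apply, Phi_apply cs b, Phi_apply cs a]
  simp [mul_comm, eta]

lemma eta_one (u : W) : eta cs 1 u = 1 := by
  rw [eta_eq_sgn cs u [] (cs.wordProd_nil), sgn_nil]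

lemma eta_simple_self (i : B) : eta cs (σ i) (σ i) = -1 := by
  rw [eta_eq_sgn cs (σ i) [i] (cs.wordProd_singleton i)]
  unfold sgn
  rw [cs.rightInvSeq_singleton, List.map_cons, List.map_nil, List.prod_cons, List.prod_nil]
  unfold ind
  rw [if_pos rfl, mul_one]

lemma eta_inv (u t : W) : eta cs u⁻¹ (u * t * u⁻¹) = eta cs u t := by
  have h := eta_mul cs u⁻¹ u t
  rw [inv_mul_cancel, eta_one] at h
  have h2 := congrArg (fun z => eta cs u t * z) h.symm
  simpa [← mul_assoc, Int.units_mul_self] using h2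

lemma eta_refl_self {t : W} (ht : cs.IsReflection t) : eta cs t t = -1 := by
  obtain ⟨u, i, rfl⟩ := ht
  set t := u * σ i * u⁻¹ with hht
  have h1 : t = (u * σ i) * u⁻¹ := by rw [hht, mul_assoc]
  rw [h1, eta_mul]
  have h2 : u⁻¹ * t * u⁻¹⁻¹ = σ i := by rw [hht]; group
  rw [h2, eta_mul, eta_simple_self]
  have h3 : σ i * σ i * (σ i)⁻¹ = σ i := by group
  rw [h3]
  have h4 : eta cs u⁻¹ t = eta cs u (σ i) := by
    rw [hht]; exact eta_inv cs u (σ i)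
  rw [h4]
  have h5 := Int.units_mul_self (eta cs u (σ i))
  rw [neg_one_mul, mul_neg, h5]

lemma sgn_eq_one_of_not_mem {u : W} {ω : List B} (h : u ∉ cs.rightInvSeq ω) :
    sgn cs u ω = 1 := by
  unfold sgn
  apply List.prod_eq_one
  intro x hx
  obtain ⟨t, ht, rfl⟩ := List.mem_map.mp hx
  unfold ind
  have hne : ¬ (t = u) := fun hc => h (by rw [← hc]; exact ht)
  rw [if_neg hne]

theorem strong_exchange_right {ω : List B} (hω : cs.IsReduced ω) {t : W}
    (ht : cs.IsReflection t) (hl : ℓ (π ω * t) < ℓ (π ω)) : t ∈ cs.rightInvSeq ω := by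
  by_contra hn
  have h1 : eta cs (π ω) t = 1 := by
    rw [eta_eq_sgn cs t ω rfl]
    exact sgn_eq_one_of_not_mem cs hn
  obtain ⟨ω', hω', hw'⟩ := cs.exists_reduced_word' (π ω * t)
  have h3 : π ω = (π ω * t) * t := by rw [mul_assoc, ht.mul_self, mul_one]
  have h4 : eta cs (π ω) t = eta cs t t * eta cs (π ω * t) (t * t * t⁻¹) := by
    nth_rw 1 [h3]
    exact eta_mul cs (π ω * t) t t
  have h5 : t * t * t⁻¹ = t := by rw [ht.mul_self, one_mul, ht.inv]
  rw [h5, eta_refl_self cs ht, h1] at h4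
  have h6 : eta cs (π ω * t) t = -1 := by
    have h7 := congrArg (fun z => (-1 : ℤˣ) * z) h4
    simpa using h7.symm
  rw [eta_eq_sgn cs t ω' hw'.symm] at h6
  have h8 : t ∈ cs.rightInvSeq ω' := by
    by_contra hn'
    rw [sgn_eq_one_of_not_mem cs hn'] at h6
    exact absurd h6 (by decide)
  have h9 := (cs.isRightInversion_of_mem_rightInvSeq hω' h8).2
  rw [← hw'] at h9
  rw [mul_assoc, ht.mul_self, mul_one] at h9
  omega

/-- Strong exchange, erasure form. -/
theorem strong_exchange_erase {ω : List B} (hω : cs.IsReduced ω) {t : W}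
    (ht : cs.IsReflection t) (hl : ℓ (π ω * t) < ℓ (π ω)) :
    ∃ j, π (ω.eraseIdx j) = π ω * t := by
  obtain ⟨j, hj, he⟩ := List.mem_iff_getElem.mp (strong_exchange_right cs hω ht hl)
  refine ⟨j, ?_⟩
  rw [← cs.wordProd_mul_getD_rightInvSeq ω j, List.getD_eq_getElem _ 1 hj, he]

theorem strong_exchange_left {ω : List B} (hω : cs.IsReduced ω) {t : W}
    (ht : cs.IsReflection t) (hl : ℓ (t * π ω) < ℓ (π ω)) : t ∈ cs.leftInvSeq ω := by
  have h1 : cs.leftInvSeq ω = (cs.rightInvSeq ω.reverse).reverse := by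
    have h := cs.leftInvSeq_reverse ω.reverse
    rwa [List.reverse_reverse] at h
  rw [h1, List.mem_reverse]
  apply strong_exchange_right cs ((cs.isReduced_reverse_iff ω).mpr hω) ht
  rw [cs.wordProd_reverse, cs.length_inv]
  have h2 : ℓ ((π ω)⁻¹ * t) = ℓ (t * π ω) := by
    rw [← cs.length_inv ((π ω)⁻¹ * t), mul_inv_rev, ht.inv, inv_inv]
  rw [h2]
  exact hl

theorem strong_exchange_left_erase {ω : List B} (hω : cs.IsReduced ω) {t : W}
    (ht : cs.IsReflection t) (hl : ℓ (t * π ω) < ℓ (π ω)) :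
    ∃ j, π (ω.eraseIdx j) = t * π ω := by
  obtain ⟨j, hj, he⟩ := List.mem_iff_getElem.mp (strong_exchange_left cs hω ht hl)
  refine ⟨j, ?_⟩
  rw [← cs.getD_leftInvSeq_mul_wordProd ω j, List.getD_eq_getElem _ 1 hj, he]

/-- Deletion property: every word has a reduced sublist with the same product. -/
theorem exists_reduced_sublist (ω : List B) :
    ∃ ω₀, ω₀ <+ ω ∧ cs.IsReduced ω₀ ∧ π ω₀ = π ω := by
  induction ω using List.reverseRecOn with
  | nil => exact ⟨[], List.Sublist.refl _, by simp [CoxeterSystem.IsReduced], rfl⟩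
  | append_singleton ω x ih =>
    obtain ⟨ω₀, hsub, hred, hprod⟩ := ih
    have hπ : π (ω₀ ++ [x]) = π (ω ++ [x]) := by
      rw [cs.wordProd_append, cs.wordProd_append, hprod]
    by_cases h : cs.IsReduced (ω₀ ++ [x])
    · exact ⟨ω₀ ++ [x], hsub.append (List.Sublist.refl _), h, hπ⟩
    · have hx : π (ω₀ ++ [x]) = π ω₀ * σ x := by
        rw [cs.wordProd_append, cs.wordProd_singleton]
      have hlt : ℓ (π ω₀ * σ x) + 1 = ℓ (π ω₀) := by
        rcases cs.length_mul_simple (π ω₀) x with hc | hc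
        · exfalso
          apply h
          unfold CoxeterSystem.IsReduced
          rw [hx, hc, hred]
          simp
        · exact hc
      have hlt' : ℓ (π ω₀ * σ x) < ℓ (π ω₀) := by omega
      have hexists : ∃ j, j < ω₀.length ∧ π (ω₀.eraseIdx j) = π ω₀ * σ x := by
        have hmem := strong_exchange_right cs hred (cs.isReflection_simple x) hlt'
        obtain ⟨j, hjlt, he⟩ := List.mem_iff_getElem.mp hmem
        refine ⟨j, ?_, ?_⟩
        · have := cs.length_rightInvSeq ω₀
          omega
        · rw [← cs.wordProd_mul_getD_rightInvSeq ω₀ j, List.getD_eq_getElem _ 1 hjlt, he]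
      obtain ⟨j, hjlt, hj⟩ := hexists
      refine ⟨ω₀.eraseIdx j, ?_, ?_, ?_⟩
      · exact ((List.eraseIdx_sublist ω₀ j).trans hsub).trans (List.sublist_append_left ω [x])
      · unfold CoxeterSystem.IsReduced
        rw [hj]
        have hlen := List.length_eraseIdx_add_one hjlt
        unfold CoxeterSystem.IsReduced at hred
        omega
      · rw [hj, ← hx, hπ]

/-- Chains in the Bruhat order. -/
inductive Ch (cs : CoxeterSystem M W) : W → W → Prop
  | refl (w : W) : Ch cs w w
  | step {y w t : W} : Ch cs y w → cs.IsReflection t → cs.length (y * t) < cs.length y →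
      Ch cs (y * t) w

lemma Ch.trans {a b c : W} (h1 : Ch cs a b) (h2 : Ch cs b c) : Ch cs a c := by
  induction h1 with
  | refl w => exact h2
  | step hch ht hl ih => exact Ch.step (ih h2) ht hl

lemma Ch.above {y w t : W} (h : Ch cs y w) (ht : cs.IsReflection t)
    (hl : ℓ w < ℓ (w * t)) : Ch cs y (w * t) := by
  refine h.trans cs ?_
  have h2 : Ch cs ((w * t) * t) (w * t) := by
    refine Ch.step (Ch.refl _) ht ?_
    rw [mul_assoc, ht.mul_self, mul_one]
    exact hl
  rwa [mul_assoc, ht.mul_self, mul_one] at h2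

lemma Ch.step_left {y w t : W} (h : Ch cs y w) (ht : cs.IsReflection t)
    (hl : ℓ (t * y) < ℓ y) : Ch cs (t * y) w := by
  have h2 : t * y = y * (y⁻¹ * t * y) := by group
  have h3 : cs.IsReflection (y⁻¹ * t * y) := by
    have := ht.conj y⁻¹
    rwa [inv_inv] at this
  rw [h2]
  exact Ch.step h h3 (by rw [← h2]; exact hl)

lemma Ch.above_left {y w t : W} (h : Ch cs y w) (ht : cs.IsReflection t)
    (hl : ℓ w < ℓ (t * w)) : Ch cs y (t * w) := by
  have h2 : t * w = w * (w⁻¹ * t * w) := by group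
  have h3 : cs.IsReflection (w⁻¹ * t * w) := by
    have := ht.conj w⁻¹
    rwa [inv_inv] at this
  rw [h2]
  refine h.above cs h3 ?_
  rw [← h2]
  exact hl

lemma leftInvSeq_cons' (i : B) (ω : List B) :
    cs.leftInvSeq (i :: ω) = σ i :: List.map (MulAut.conj (σ i)) (cs.leftInvSeq ω) := rfl

/-- Key geometric lemma: if `x t < x` but `(σ i x) t > σ i x`, then `σ i x t = x`. -/
lemma key_M {i : B} {t x : W} (ht : cs.IsReflection t)
    (h1 : ℓ (x * t) < ℓ x) (h2 : ℓ (σ i * x) < ℓ (σ i * x * t)) :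
    σ i * x * t = x := by
  have hrr : cs.IsReflection (x * t * x⁻¹) := ht.conj x
  have hrx : (x * t * x⁻¹) * x = x * t := by group
  have key : ∀ ω : List B, cs.IsReduced ω → π ω = x →
      (x * t * x⁻¹) ∈ cs.leftInvSeq ω := by
    intro ω hred hw
    apply strong_exchange_left cs hred hrr
    rw [hw, hrx]
    exact h1
  have hsx : ℓ (σ i * x) < ℓ x := by
    rcases cs.length_simple_mul x i with hc | hc
    · exfalso
      obtain ⟨ω, hred, hw⟩ := cs.exists_reduced_word' x
      have hred2 : cs.IsReduced (i :: ω) := by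
        unfold CoxeterSystem.IsReduced
        rw [cs.wordProd_cons, ← hw, hc, List.length_cons]
        unfold CoxeterSystem.IsReduced at hred
        rw [hw, hred]
      have hmem := key ω hred hw.symm
      have hmem2 : σ i * (x * t * x⁻¹) * σ i ∈ cs.leftInvSeq (i :: ω) := by
        rw [leftInvSeq_cons']
        refine List.mem_cons_of_mem _ (List.mem_map.mpr ⟨x * t * x⁻¹, hmem, ?_⟩)
        rw [MulAut.conj_apply, cs.inv_simple]
      have h3 := (cs.isLeftInversion_of_mem_leftInvSeq hred2 hmem2).2
      rw [cs.wordProd_cons, ← hw] at h3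
      have h4 : σ i * (x * t * x⁻¹) * σ i * (σ i * x) = σ i * x * t := by
        rw [show σ i * (x * t * x⁻¹) * σ i * (σ i * x) = σ i * (x * t * x⁻¹) * (σ i * σ i) * x
          from by group, cs.simple_mul_simple_self]
        group
      rw [h4] at h3
      omega
    · omega
  -- Now get a reduced word for x starting with i
  obtain ⟨τ, hτ, hτw⟩ := cs.exists_reduced_word' (σ i * x)
  have hπ : π (i :: τ) = x := by
    rw [cs.wordProd_cons, ← hτw, ← mul_assoc, cs.simple_mul_simple_self, one_mul]
  have hred2 : cs.IsReduced (i :: τ) := by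
    unfold CoxeterSystem.IsReduced
    rw [hπ, List.length_cons]
    unfold CoxeterSystem.IsReduced at hτ
    rw [← hτw] at hτ
    rcases cs.length_simple_mul x i with hc | hc
    · omega
    · omega
  have hmem := key (i :: τ) hred2 hπ
  rw [leftInvSeq_cons'] at hmem
  rcases List.mem_cons.mp hmem with heq | hmem2
  · have h3 : σ i * x = x * t := by rw [← heq]; exact hrx
    rw [h3, mul_assoc, ht.mul_self, mul_one]
  · exfalso
    obtain ⟨r', hr', heq⟩ := List.mem_map.mp hmem2
    have hr'' : r' = σ i * (x * t * x⁻¹) * σ i := by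
      rw [MulAut.conj_apply, cs.inv_simple] at heq
      rw [← heq]
      rw [show σ i * (σ i * r' * σ i) * σ i = (σ i * σ i) * r' * (σ i * σ i) from by group,
        cs.simple_mul_simple_self, one_mul, mul_one]
    have h3 := (cs.isLeftInversion_of_mem_leftInvSeq hτ hr').2
    rw [← hτw, hr''] at h3
    have h4 : σ i * (x * t * x⁻¹) * σ i * (σ i * x) = σ i * x * t := by
      rw [show σ i * (x * t * x⁻¹) * σ i * (σ i * x) = σ i * (x * t * x⁻¹) * (σ i * σ i) * x
        from by group, cs.simple_mul_simple_self]
      group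
    rw [h4] at h3
    omega

/-- Lifting for chains: left multiplication by a simple reflection. -/
lemma Ch.simple_mul {i : B} {a b : W} (h : Ch cs a b) (hb : ℓ b < ℓ (σ i * b)) :
    Ch cs (σ i * a) (σ i * b) := by
  induction h with
  | refl w => exact Ch.refl _
  | @step y w t hch ht hl ih =>
    rcases Nat.lt_or_ge (ℓ (σ i * y * t)) (ℓ (σ i * y)) with hc | hc
    · have := Ch.step (ih hb) ht hc
      rwa [mul_assoc] at this
    · have hne : ℓ ((σ i * y) * t) ≠ ℓ (σ i * y) := ht.length_mul_left_ne (σ i * y)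
      have hc' : ℓ (σ i * y) < ℓ (σ i * y * t) := by omega
      have heq := key_M cs ht hl hc'
      rw [← mul_assoc, heq]
      exact hch.above_left cs (cs.isReflection_simple i) hb

/-- Subwords of reduced words are below in the chain order. -/
lemma ch_of_sublist : ∀ {ω ω' : List B}, cs.IsReduced ω → ω' <+ ω →
    Ch cs (π ω') (π ω) := by
  intro ω
  induction ω with
  | nil =>
    intro ω' _ h
    rw [List.sublist_nil.mp h]
    exact Ch.refl _
  | cons i τ ih =>
    intro ω' hred hsub
    have hτ : cs.IsReduced τ := by
      have := hred.drop 1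
      simpa using this
    have hlen : ℓ (π τ) < ℓ (σ i * π τ) := by
      have h1 : ℓ (π (i :: τ)) = τ.length + 1 := by
        unfold CoxeterSystem.IsReduced at hred
        rw [hred, List.length_cons]
      rw [cs.wordProd_cons] at h1
      unfold CoxeterSystem.IsReduced at hτ
      omega
    rcases List.sublist_cons_iff.mp hsub with h | ⟨r, rfl, hr⟩
    · have := (ih hτ h).above_left cs (cs.isReflection_simple i) hlen
      rwa [← cs.wordProd_cons] at this
    · rw [cs.wordProd_cons, cs.wordProd_cons]
      exact (ih hτ hr).simple_mul cs hlen

/-- Chain order elements appear as subwords of every reduced word. -/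
lemma sublist_of_ch {y w : W} (h : Ch cs y w) :
    ∀ {ω : List B}, cs.IsReduced ω → π ω = w → ∃ ω', ω' <+ ω ∧ π ω' = y := by
  induction h with
  | refl w =>
    intro ω _ hw
    exact ⟨ω, List.Sublist.refl ω, hw⟩
  | @step y w t hch ht hl ih =>
    intro ω hred hw
    obtain ⟨ω', hsub, hprod⟩ := ih hred hw
    obtain ⟨ω'', hsub2, hred2, hprod2⟩ := exists_reduced_sublist cs ω'
    obtain ⟨j, hje⟩ := strong_exchange_erase cs hred2 ht
      (by rw [hprod2, hprod]; exact hl)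
    exact ⟨ω''.eraseIdx j, ((List.eraseIdx_sublist _ j).trans hsub2).trans hsub,
      by rw [hje, hprod2, hprod]⟩


/-! ### Lemmas about `bruhat` -/

lemma br_iff_ch {y w : W} : bruhat cs y w ↔ Ch cs y w := by
  constructor
  · rintro ⟨ω, hred, rfl, ω', hsub, rfl⟩
    exact ch_of_sublist cs hred hsub
  · intro h
    obtain ⟨ω, hred, hw⟩ := cs.exists_reduced_word' w
    obtain ⟨ω', hsub, hy⟩ := sublist_of_ch cs h hred hw.symm
    exact ⟨ω, hred, hw.symm, ω', hsub, hy⟩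

lemma br_refl (w : W) : bruhat cs w w := by
  obtain ⟨ω, hred, hw⟩ := cs.exists_reduced_word' w
  exact ⟨ω, hred, hw.symm, ω, List.Sublist.refl ω, hw.symm⟩

lemma br_length_le {y w : W} (h : bruhat cs y w) : ℓ y ≤ ℓ w := by
  obtain ⟨ω, hred, hw, ω', hsub, hy⟩ := h
  calc ℓ y = ℓ (π ω') := by rw [hy]
    _ ≤ ω'.length := cs.length_wordProd_le ω'
    _ ≤ ω.length := hsub.length_le
    _ = ℓ w := by rw [← hw]; exact hred.symm

lemma br_eq_of_length_ge {y w : W} (h : bruhat cs y w) (hl : ℓ w ≤ ℓ y) : y = w := by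
  obtain ⟨ω, hred, hw, ω', hsub, hy⟩ := h
  have h1 : ℓ y ≤ ω'.length := by rw [← hy]; exact cs.length_wordProd_le ω'
  have h2 : ω'.length ≤ ω.length := hsub.length_le
  have h3 : ω.length = ℓ w := by rw [← hw]; exact hred.symm
  have h4 : ω' = ω := hsub.eq_of_length (by omega)
  rw [← hy, h4, hw]

lemma br_one (w : W) : bruhat cs 1 w := by
  obtain ⟨ω, hred, hw⟩ := cs.exists_reduced_word' w
  exact ⟨ω, hred, hw.symm, [], List.nil_sublist ω, cs.wordProd_nil⟩

/-- If `ℓ(σ i * w) < ℓ w` then `i :: τ` is a reduced word for `w`,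
for any reduced word `τ` for `σ i * w`. -/
lemma reduced_cons_of_descent {i : B} {w : W} (hsw : ℓ (σ i * w) < ℓ w)
    {τ : List B} (hτ : cs.IsReduced τ) (hπ : π τ = σ i * w) :
    cs.IsReduced (i :: τ) ∧ π (i :: τ) = w := by
  have hd : ℓ (σ i * w) + 1 = ℓ w := by
    rcases cs.length_simple_mul w i with hc | hc <;> omega
  have hπ2 : π (i :: τ) = w := by
    rw [cs.wordProd_cons, hπ, ← mul_assoc, cs.simple_mul_simple_self, one_mul]
  refine ⟨?_, hπ2⟩
  unfold CoxeterSystem.IsReduced at hτ ⊢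
  rw [hπ] at hτ
  rw [hπ2, List.length_cons]
  omega

lemma br_prep {i : B} {w x : W} (hsw : ℓ (σ i * w) < ℓ w)
    (h : bruhat cs x (σ i * w)) : bruhat cs x w ∧ bruhat cs (σ i * x) w := by
  obtain ⟨τ, hred, hπ, ω', hsub, hx⟩ := h
  obtain ⟨hred2, hπ2⟩ := reduced_cons_of_descent cs hsw hred hπ
  constructor
  · exact ⟨i :: τ, hred2, hπ2, ω', hsub.cons i, hx⟩
  · exact ⟨i :: τ, hred2, hπ2, i :: ω', hsub.cons₂ i, by rw [cs.wordProd_cons, hx]⟩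

lemma br_prep2 {i : B} {x z : W} (hup : ℓ x < ℓ (σ i * x)) (h : bruhat cs z x) :
    bruhat cs (σ i * z) (σ i * x) ∧ bruhat cs z (σ i * x) := by
  obtain ⟨τ, hred, hπ, ω', hsub, hz⟩ := h
  have hd : ℓ (σ i * x) = ℓ x + 1 := by
    rcases cs.length_simple_mul x i with hc | hc <;> omega
  have hπ2 : π (i :: τ) = σ i * x := by rw [cs.wordProd_cons, hπ]
  have hred2 : cs.IsReduced (i :: τ) := by
    unfold CoxeterSystem.IsReduced at hred ⊢
    rw [hπ] at hred
    rw [hπ2, List.length_cons, hd, hred]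
  constructor
  · exact ⟨i :: τ, hred2, hπ2, i :: ω', hsub.cons₂ i, by rw [cs.wordProd_cons, hz]⟩
  · exact ⟨i :: τ, hred2, hπ2, ω', hsub.cons i, hz⟩

/-- Lifting, descending case: if `σ i w < w`, `σ i y < y`, `y ≤ w` then `σ i y ≤ σ i w`. -/
lemma br_lift_desc {i : B} {y w : W} (hsw : ℓ (σ i * w) < ℓ w)
    (hy : ℓ (σ i * y) < ℓ y) (h : bruhat cs y w) : bruhat cs (σ i * y) (σ i * w) := by
  obtain ⟨τ, hτred, hτπ⟩ := cs.exists_reduced_word' (σ i * w)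
  obtain ⟨hred2, hπ2⟩ := reduced_cons_of_descent cs hsw hτred hτπ.symm
  obtain ⟨ω', hsub, hprod⟩ := sublist_of_ch cs ((br_iff_ch cs).mp h) hred2 hπ2
  obtain ⟨ω'', hsub2, hred3, hprod3⟩ := exists_reduced_sublist cs ω'
  rw [hprod] at hprod3
  rcases List.sublist_cons_iff.mp (hsub2.trans hsub) with hc | ⟨ρ, hrfl, hρ⟩
  · obtain ⟨j, hj⟩ := strong_exchange_left_erase cs hred3 (cs.isReflection_simple i)
      (by rw [hprod3]; exact hy)
    refine ⟨τ, hτred, hτπ.symm, ω''.eraseIdx j, (List.eraseIdx_sublist _ j).trans hc, ?_⟩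
    rw [hj, hprod3]
  · refine ⟨τ, hτred, hτπ.symm, ρ, hρ, ?_⟩
    have h2 : π ω'' = σ i * π ρ := by rw [hrfl, cs.wordProd_cons]
    rw [hprod3] at h2
    rw [← one_mul (π ρ), ← cs.simple_mul_simple_self i, mul_assoc, ← h2]

/-- Lifting, ascending case: if `σ i w < w`, `σ i y > y`, `y ≤ w` then `y ≤ σ i w`. -/
lemma br_lift_asc {i : B} {y w : W} (hsw : ℓ (σ i * w) < ℓ w)
    (hy : ℓ y < ℓ (σ i * y)) (h : bruhat cs y w) : bruhat cs y (σ i * w) := by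
  obtain ⟨τ, hτred, hτπ⟩ := cs.exists_reduced_word' (σ i * w)
  obtain ⟨hred2, hπ2⟩ := reduced_cons_of_descent cs hsw hτred hτπ.symm
  obtain ⟨ω', hsub, hprod⟩ := sublist_of_ch cs ((br_iff_ch cs).mp h) hred2 hπ2
  obtain ⟨ω'', hsub2, hred3, hprod3⟩ := exists_reduced_sublist cs ω'
  rw [hprod] at hprod3
  rcases List.sublist_cons_iff.mp (hsub2.trans hsub) with hc | ⟨ρ, hrfl, hρ⟩
  · exact ⟨τ, hτred, hτπ.symm, ω'', hc, hprod3⟩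
  · exfalso
    have h2 : π ρ = σ i * y := by
      rw [← one_mul (π ρ), ← cs.simple_mul_simple_self i, mul_assoc, ← cs.wordProd_cons,
        ← hrfl, hprod3]
    have h3 : ℓ y = ρ.length + 1 := by
      unfold CoxeterSystem.IsReduced at hred3
      rw [hprod3] at hred3
      rw [hred3, hrfl, List.length_cons]
    have h4 : ℓ (σ i * y) ≤ ρ.length := by
      rw [← h2]
      exact cs.length_wordProd_le ρ
    omega

/-! ### Lemmas about `rWeak` -/

lemma rw_one (v : W) : rWeak cs 1 v := by
  unfold rWeak
  rw [cs.length_one, inv_one, one_mul, zero_add]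

lemma rw_desc {i : B} {y v : W} (h : rWeak cs y v) (hy : ℓ (σ i * y) < ℓ y) :
    rWeak cs (σ i * y) (σ i * v) ∧ ℓ (σ i * v) < ℓ v := by
  unfold rWeak at h
  have hd : ℓ (σ i * y) + 1 = ℓ y := by
    rcases cs.length_simple_mul y i with hc | hc <;> omega
  have he : (σ i * y)⁻¹ * (σ i * v) = y⁻¹ * v := by
    rw [mul_inv_rev, cs.inv_simple, mul_assoc, ← mul_assoc (σ i) (σ i) v,
      cs.simple_mul_simple_self, one_mul]
  have h2 : ℓ (σ i * v) ≤ ℓ (σ i * y) + ℓ (y⁻¹ * v) := by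
    have h3 : σ i * v = (σ i * y) * (y⁻¹ * v) := by group
    rw [h3]
    exact cs.length_mul_le _ _
  have hdv : ℓ (σ i * v) + 1 = ℓ v := by
    rcases cs.length_simple_mul v i with hc | hc <;> omega
  constructor
  · unfold rWeak
    rw [he]
    omega
  · omega

lemma rw_not_desc {i : B} {x u : W} (h : rWeak cs x u) (hu : ℓ u < ℓ (σ i * u)) :
    ℓ x < ℓ (σ i * x) := by
  by_contra hc
  have hne : ℓ (σ i * x) ≠ ℓ x := cs.length_simple_mul_ne x i
  have h2 : ℓ (σ i * x) < ℓ x := by omega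
  have := (rw_desc cs h h2).2
  omega

lemma rw_step_up {i : B} {x v : W} (h : rWeak cs x (σ i * v)) (hv : ℓ (σ i * v) < ℓ v)
    (hx : ℓ x < ℓ (σ i * x)) : rWeak cs (σ i * x) v := by
  unfold rWeak at h ⊢
  have hd : ℓ (σ i * x) = ℓ x + 1 := by
    rcases cs.length_simple_mul x i with hc | hc <;> omega
  have hdv : ℓ (σ i * v) + 1 = ℓ v := by
    rcases cs.length_simple_mul v i with hc | hc <;> omega
  have he : (σ i * x)⁻¹ * v = x⁻¹ * (σ i * v) := by
    rw [mul_inv_rev, cs.inv_simple, mul_assoc]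
  rw [he, hd]
  omega

/-- Exchange for the weak order: if `y ≤_R v`, `σ i y > y`, `σ i v < v` then `y ≤_R σ i v`. -/
lemma rw_lift {i : B} {y v : W} (h : rWeak cs y v) (hy : ℓ y < ℓ (σ i * y))
    (hv : ℓ (σ i * v) < ℓ v) : rWeak cs y (σ i * v) := by
  unfold rWeak at h ⊢
  obtain ⟨α, hαred, hα⟩ := cs.exists_reduced_word' y
  obtain ⟨β, hβred, hβ⟩ := cs.exists_reduced_word' (y⁻¹ * v)
  have hπ : π (α ++ β) = v := by
    rw [cs.wordProd_append, ← hα, ← hβ, ← mul_assoc, mul_inv_cancel, one_mul]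
  have hred : cs.IsReduced (α ++ β) := by
    unfold CoxeterSystem.IsReduced at hαred hβred ⊢
    rw [hπ, List.length_append, ← hαred, ← hβred, ← hα, ← hβ]
    exact h.symm
  have hmem := strong_exchange_left cs hred (cs.isReflection_simple i)
    (by rw [hπ]; exact hv)
  obtain ⟨j, hjlt, hje⟩ := List.mem_iff_getElem.mp hmem
  have hjlt' : j < α.length + β.length := by
    have := cs.length_leftInvSeq (α ++ β)
    rw [List.length_append] at this
    omega
  rcases Nat.lt_or_ge j α.length with hj | hj
  · exfalso
    have htake : cs.leftInvSeq α = (cs.leftInvSeq (α ++ β)).take α.length := by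
      rw [← cs.leftInvSeq_take (α ++ β) α.length, List.take_left]
    have hjlt2 : j < (cs.leftInvSeq α).length := by
      rw [cs.length_leftInvSeq]; exact hj
    have e1 : (cs.leftInvSeq (α ++ β)).getD j 1 = (cs.leftInvSeq α).getD j 1 := by
      rw [cs.getD_leftInvSeq, cs.getD_leftInvSeq, List.take_append_of_le_length (by omega),
        List.getElem?_append_left hj]
    have e2 : (cs.leftInvSeq (α ++ β)).getD j 1 = σ i := by
      rw [List.getD_eq_getElem _ 1 hjlt, hje]
    have hmem2 : σ i ∈ cs.leftInvSeq α := by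
      rw [← e2, e1, List.getD_eq_getElem _ 1 hjlt2]
      exact List.getElem_mem hjlt2
    have h3 := (cs.isLeftInversion_of_mem_leftInvSeq hαred hmem2).2
    rw [← hα] at h3
    omega
  · have he : π ((α ++ β).eraseIdx j) = σ i * v := by
      rw [← cs.getD_leftInvSeq_mul_wordProd (α ++ β) j, hπ,
        List.getD_eq_getElem _ 1 (by rw [cs.length_leftInvSeq, List.length_append]; omega), hje]
    rw [List.eraseIdx_append_of_length_le hj] at he
    have h4 : y⁻¹ * (σ i * v) = π (β.eraseIdx (j - α.length)) := by
      rw [cs.wordProd_append, ← hα] at he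
      rw [← he]
      group
    have h5 : ℓ (y⁻¹ * (σ i * v)) ≤ β.length - 1 := by
      rw [h4]
      have h6 := cs.length_wordProd_le (β.eraseIdx (j - α.length))
      have h7 : j - α.length < β.length := by omega
      have h8 := List.length_eraseIdx_add_one h7
      omega
    have hdv : ℓ (σ i * v) + 1 = ℓ v := by
      rcases cs.length_simple_mul v i with hc | hc <;> omega
    have h9 : ℓ (σ i * v) ≤ ℓ y + ℓ (y⁻¹ * (σ i * v)) := by
      have h10 := cs.length_mul_le y (y⁻¹ * (σ i * v))
      rw [← mul_assoc, mul_inv_cancel, one_mul] at h10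
      exact h10
    have h11 : β.length = ℓ (y⁻¹ * v) := by
      unfold CoxeterSystem.IsReduced at hβred
      rw [← hβ] at hβred
      omega
    omega

/-! ### The main induction -/

theorem exists_max : ∀ (n : ℕ) (v w : W), ℓ w ≤ n →
    ∃ x, rWeak cs x v ∧ bruhat cs x w ∧
      ∀ y, rWeak cs y v → bruhat cs y w → bruhat cs y x := by
  intro n
  induction n with
  | zero =>
    intro v w hw
    have hw1 : w = 1 := cs.length_eq_zero_iff.mp (by omega)
    subst hw1
    refine ⟨1, rw_one cs v, br_refl cs 1, ?_⟩
    intro y _ hy2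
    have : y = 1 := br_eq_of_length_ge cs hy2 (by simp)
    rw [this]
    exact br_refl cs 1
  | succ n ih =>
    intro v w hw
    by_cases hw1 : w = 1
    · subst hw1
      refine ⟨1, rw_one cs v, br_refl cs 1, ?_⟩
      intro y _ hy2
      have : y = 1 := br_eq_of_length_ge cs hy2 (by simp)
      rw [this]
      exact br_refl cs 1
    · obtain ⟨k, hk⟩ := cs.exists_leftDescent_of_ne_one hw1
      have hskw : ℓ (σ k * w) < ℓ w := hk
      have hswn : ℓ (σ k * w) ≤ n := by omega
      by_cases hv : ℓ (σ k * v) < ℓ v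
      · obtain ⟨x, hx1, hx2, hx3⟩ := ih (σ k * v) (σ k * w) hswn
        have hup : ℓ x < ℓ (σ k * x) := by
          apply rw_not_desc cs hx1
          rw [← mul_assoc, cs.simple_mul_simple_self, one_mul]
          exact hv
        refine ⟨σ k * x, rw_step_up cs hx1 hv hup, (br_prep cs hskw hx2).2, ?_⟩
        intro y hy1 hy2
        have hne : ℓ (σ k * y) ≠ ℓ y := cs.length_simple_mul_ne y k
        rcases Nat.lt_or_ge (ℓ (σ k * y)) (ℓ y) with hyd | hya
        · have h5 := (rw_desc cs hy1 hyd).1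
          have h6 := br_lift_desc cs hskw hyd hy2
          have h7 := hx3 _ h5 h6
          have h8 := (br_prep2 cs hup h7).1
          rwa [← mul_assoc, cs.simple_mul_simple_self, one_mul] at h8
        · have hya' : ℓ y < ℓ (σ k * y) := by omega
          have h5 := rw_lift cs hy1 hya' hv
          have h6 := br_lift_asc cs hskw hya' hy2
          have h7 := hx3 _ h5 h6
          exact (br_prep2 cs hup h7).2
      · have hv' : ℓ v < ℓ (σ k * v) := by
          have := cs.length_simple_mul_ne v k
          omega
        obtain ⟨x, hx1, hx2, hx3⟩ := ih v (σ k * w) hswn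
        refine ⟨x, hx1, (br_prep cs hskw hx2).1, ?_⟩
        intro y hy1 hy2
        have hya : ℓ y < ℓ (σ k * y) := rw_not_desc cs hy1 hv'
        exact hx3 y hy1 (br_lift_asc cs hskw hya hy2)

end CoxProofAux

/-- In a finite Coxeter group, for every `v, w` the set
`[e,v]_R ∩ [e,w] = {x : x ≤_R v and x ≤ w}` has a unique element of maximal length. -/
theorem stmt1 {B W : Type*} [Group W] {M : CoxeterMatrix B} (cs : CoxeterSystem M W)
    [Finite W] (v w : W) :
    ∃! x : W, (rWeak cs x v ∧ bruhat cs x w) ∧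
      ∀ y : W, rWeak cs y v → bruhat cs y w → cs.length y ≤ cs.length x := by
  obtain ⟨x, h1, h2, h3⟩ := CoxProofAux.exists_max cs (cs.length w) v w le_rfl
  refine ⟨x, ⟨⟨h1, h2⟩, fun y hy1 hy2 => CoxProofAux.br_length_le cs (h3 y hy1 hy2)⟩, ?_⟩
  rintro x' ⟨⟨g1, g2⟩, g3⟩
  have hbx : bruhat cs x' x := h3 x' g1 g2
  exact CoxProofAux.br_eq_of_length_ge cs hbx (g3 x h1 h2)
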